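/- Every sesqui-pushout rewrite step with an injective matching can be simulated by polarized-cloning rewriting: given a span ρ = (L ← K → R) of graphs, define the polarized rule ρ' with K_N⁺ = K_N⁻ = K_N, K_E⋆ = ∅, L_N⁺ = L_N⁻ = L_N, L_E⋆ = ∅. Then for every injective matching m : L → G, if G ⇒_sqpo,ρ H then G ⇒_pc,ρ' H. -/

import Mathlib

universe u

structure RGraph : Type (u + 1) where
  N : Type u
  E : Type u
  src : E → N
  tgt : E → N

@[ext]
structure GraphHom (X Y : RGraph.{u}) where
  fN : X.N → Y.N
  fE : X.E → Y.E
  hsrc : ∀ e, Y.src (fE e) = fN (X.src e)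
  htgt : ∀ e, Y.tgt (fE e) = fN (X.tgt e)

def GraphHom.id (X : RGraph.{u}) : GraphHom X X :=
  ⟨_root_.id, _root_.id, fun _ => rfl, fun _ => rfl⟩

/-- `g.comp f` is the composite `g ∘ f`. -/
def GraphHom.comp {X Y Z : RGraph.{u}} (g : GraphHom Y Z) (f : GraphHom X Y) :
    GraphHom X Z :=
  ⟨g.fN ∘ f.fN, g.fE ∘ f.fE,
    fun e => by simp [Function.comp, g.hsrc, f.hsrc],
    fun e => by simp [Function.comp, g.htgt, f.htgt]⟩

/-- A polarization of a graph: distinguished node subsets `N⁺`, `N⁻` and a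
distinguished edge subset `E⋆` such that every edge in `E⋆` has its source
in `N⁺` and its target in `N⁻`. -/
structure Polarization (X : RGraph.{u}) where
  Np : Set X.N
  Nm : Set X.N
  Es : Set X.E
  hs : ∀ e ∈ Es, X.src e ∈ Np
  ht : ∀ e ∈ Es, X.tgt e ∈ Nm

/-- A polarized graph: a graph together with a polarization. -/
structure PGraph : Type (u + 1) where
  toGraph : RGraph.{u}
  pol : Polarization toGraph

/-- A morphism of polarized graphs: a graph morphism preserving the three
distinguished subsets. -/
structure PGraphHom (X Y : PGraph.{u}) where
  toHom : GraphHom X.toGraph Y.toGraph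
  hNp : ∀ n ∈ X.pol.Np, toHom.fN n ∈ Y.pol.Np
  hNm : ∀ n ∈ X.pol.Nm, toHom.fN n ∈ Y.pol.Nm
  hEs : ∀ e ∈ X.pol.Es, toHom.fE e ∈ Y.pol.Es

def PGraphHom.id (X : PGraph.{u}) : PGraphHom X X :=
  ⟨GraphHom.id X.toGraph, fun _ h => h, fun _ h => h, fun _ h => h⟩

/-- `g.comp f` is the composite `g ∘ f`. -/
def PGraphHom.comp {X Y Z : PGraph.{u}} (g : PGraphHom Y Z) (f : PGraphHom X Y) :
    PGraphHom X Z :=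
  ⟨g.toHom.comp f.toHom,
    fun n h => g.hNp _ (f.hNp n h),
    fun n h => g.hNm _ (f.hNm n h),
    fun e h => g.hEs _ (f.hEs e h)⟩

/-- A matching of polarized graphs: a monomorphism (equivalently: both
components injective) strictly reflecting the polarization. -/
def Matching {X Y : PGraph.{u}} (f : PGraphHom X Y) : Prop :=
  Function.Injective f.toHom.fN ∧ Function.Injective f.toHom.fE ∧
  (∀ n, f.toHom.fN n ∈ Y.pol.Np ↔ n ∈ X.pol.Np) ∧
  (∀ n, f.toHom.fN n ∈ Y.pol.Nm ↔ n ∈ X.pol.Nm) ∧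
  (∀ e, f.toHom.fE e ∈ Y.pol.Es ↔ e ∈ X.pol.Es)

/-- `(l, d)` is the pullback of `(m, l₁)` in the category of graphs. -/
def IsPullbackSquare {K L D G : RGraph.{u}} (l : GraphHom K L)
    (d : GraphHom K D) (m : GraphHom L G) (l₁ : GraphHom D G) : Prop :=
  m.comp l = l₁.comp d ∧
  ∀ (K' : RGraph.{u}) (l' : GraphHom K' L) (d' : GraphHom K' D),
    m.comp l' = l₁.comp d' →
    ∃! κ : GraphHom K' K, l.comp κ = l' ∧ d.comp κ = d'

/-- `(l₁, d)` is the final pullback complement of `(m, l)` in graphs. -/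
def IsFinalPBC {K L D G : RGraph.{u}} (m : GraphHom L G) (l : GraphHom K L)
    (d : GraphHom K D) (l₁ : GraphHom D G) : Prop :=
  IsPullbackSquare l d m l₁ ∧
  ∀ (D' : RGraph.{u}) (d' : GraphHom K D') (l₁' : GraphHom D' G),
    IsPullbackSquare l d' m l₁' →
    ∃! δ : GraphHom D' D, δ.comp d' = d ∧ l₁.comp δ = l₁'

/-- `(r₁, h)` is the pushout of `(d, r)` in the category of graphs. -/
def IsPushoutSquare {K R D H : RGraph.{u}} (d : GraphHom K D)
    (r : GraphHom K R) (r₁ : GraphHom D H) (h : GraphHom R H) : Prop :=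
  r₁.comp d = h.comp r ∧
  ∀ (H' : RGraph.{u}) (r₁' : GraphHom D H') (h' : GraphHom R H'),
    r₁'.comp d = h'.comp r →
    ∃! η : GraphHom H H', η.comp r₁ = r₁' ∧ η.comp h = h'

/-- `(l, d)` is the pullback of `(m, l₁)` in polarized graphs. -/
def IsPPullbackSquare {K L D G : PGraph.{u}} (l : PGraphHom K L)
    (d : PGraphHom K D) (m : PGraphHom L G) (l₁ : PGraphHom D G) : Prop :=
  m.comp l = l₁.comp d ∧
  ∀ (K' : PGraph.{u}) (l' : PGraphHom K' L) (d' : PGraphHom K' D),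
    m.comp l' = l₁.comp d' →
    ∃! κ : PGraphHom K' K, l.comp κ = l' ∧ d.comp κ = d'

/-- All linking edges for `f` (edges of the codomain outside the image of
`f` with some endpoint in the image of `f`) are polarized. -/
def LinkPolarized {X Y : PGraph.{u}} (f : PGraphHom X Y) : Prop :=
  ∀ e : Y.toGraph.E, e ∉ Set.range f.toHom.fE →
    (Y.toGraph.src e ∈ Set.range f.toHom.fN ∨
     Y.toGraph.tgt e ∈ Set.range f.toHom.fN) →
    e ∈ Y.pol.Es

/-- A polarized pullback complement of `(m, l)`. -/
def IsPolarizedPBC {K L D G : PGraph.{u}} (m : PGraphHom L G)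
    (l : PGraphHom K L) (d : PGraphHom K D) (l₁ : PGraphHom D G) : Prop :=
  IsPPullbackSquare l d m l₁ ∧ LinkPolarized m ∧ LinkPolarized d

/-- `(l₁, d)` is the polarized pushback (terminal polarized pullback
complement) of `(m, l)`. -/
def IsPolarizedPushback {K L D G : PGraph.{u}} (m : PGraphHom L G)
    (l : PGraphHom K L) (d : PGraphHom K D) (l₁ : PGraphHom D G) : Prop :=
  IsPolarizedPBC m l d l₁ ∧
  ∀ (D' : PGraph.{u}) (d' : PGraphHom K D') (l₁' : PGraphHom D' G),
    IsPolarizedPBC m l d' l₁' →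
    ∃! δ : PGraphHom D' D, δ.comp d' = d ∧ l₁.comp δ = l₁'

/-- `mp` exhibits its codomain as the *maximal* polarization of `G`
preserving the polarization of `L`: `mp` is a matching, every node outside
the image of `mp` is polarized both `+` and `-`, and an edge outside the
image of `mp` is polarized exactly when its source is in `N⁺` and its
target is in `N⁻`. -/
def MaxPol {L G : PGraph.{u}} (mp : PGraphHom L G) : Prop :=
  Matching mp ∧
  (∀ n, n ∉ Set.range mp.toHom.fN → n ∈ G.pol.Np ∧ n ∈ G.pol.Nm) ∧
  (∀ e, e ∉ Set.range mp.toHom.fE →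
    (e ∈ G.pol.Es ↔
      G.toGraph.src e ∈ G.pol.Np ∧ G.toGraph.tgt e ∈ G.pol.Nm))

/-- The rewrite step `G ⇒_pc H` of graph rewriting with polarized cloning,
with respect to a rule `(l : 𝐊 → 𝐋, r : K → R)` and a matching `m : L → G`:
(1) equip `G` with the maximal polarization preserving that of `L`;
(2) take the polarized pushback of `(m, l)` in polarized graphs;
(3) forget the polarization;
(4) take the pushout of `(d, r)` in graphs, yielding `H`. -/
def PCStep {K L : PGraph.{u}} (l : PGraphHom K L) {R : RGraph.{u}}
    (r : GraphHom K.toGraph R) {G : RGraph.{u}}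
    (m : GraphHom L.toGraph G) (H : RGraph.{u}) : Prop :=
  ∃ (Gpol : Polarization G) (mp : PGraphHom L ⟨G, Gpol⟩),
    mp.toHom = m ∧ MaxPol mp ∧
    ∃ (Dp : PGraph.{u}) (d : PGraphHom K Dp)
      (l₁ : PGraphHom Dp ⟨G, Gpol⟩),
      IsPolarizedPushback mp l d l₁ ∧
      ∃ (r₁ : GraphHom Dp.toGraph H) (h : GraphHom R H),
        IsPushoutSquare d.toHom r r₁ h

/-- The sesqui-pushout rewrite step `G ⇒_sqpo H` with rule `L ← K → R` and
matching `m : L → G`: take the final pullback complement of `(m, l)` in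
graphs to get `D`, then the pushout of `(d, r)` to get `H`. -/
def SqPOStep {K L R : RGraph.{u}} (l : GraphHom K L) (r : GraphHom K R)
    {G : RGraph.{u}} (m : GraphHom L G) (H : RGraph.{u}) : Prop :=
  ∃ (D : RGraph.{u}) (d : GraphHom K D) (l₁ : GraphHom D G),
    IsFinalPBC m l d l₁ ∧
    ∃ (r₁ : GraphHom D H) (h : GraphHom R H),
      IsPushoutSquare d r r₁ h

/-- The fully polarized graph on `X`: `N⁺ = N⁻ = N`, `E⋆ = ∅`. -/
def fullyPolarized (X : RGraph.{u}) : PGraph.{u} :=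
  ⟨X, ⟨Set.univ, Set.univ, ∅,
    fun _ he => absurd he (Set.notMem_empty _),
    fun _ he => absurd he (Set.notMem_empty _)⟩⟩

/-- The polarized rule `ρ'` associated to a span `L ← K → R` of graphs:
`K⁺ = K⁻ = K_N`, `K⋆ = ∅`, `L⁺ = L⁻ = L_N`, `L⋆ = ∅`. -/
def spanPolarizedRule {K L : RGraph.{u}} (l : GraphHom K L) :
    PGraphHom (fullyPolarized K) (fullyPolarized L) :=
  ⟨l, fun _ _ => Set.mem_univ _, fun _ _ => Set.mem_univ _,
    fun _ he => absurd he (Set.notMem_empty _)⟩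

/-- Polarized graph homs are determined by their underlying graph hom. -/
lemma pg_ext {X Y : PGraph.{u}} {f g : PGraphHom X Y}
    (h : f.toHom = g.toHom) : f = g := by
  cases f; cases g; cases h; rfl

/-- The walking edge graph. -/
def WEdge : RGraph.{u} :=
  ⟨ULift Bool, PUnit.{u + 1}, fun _ => ⟨false⟩, fun _ => ⟨true⟩⟩

/-- The graph hom from the walking edge picking out an edge. -/
def homOfEdge (X : RGraph.{u}) (e : X.E) : GraphHom WEdge X :=
  ⟨fun b => if b.down then X.tgt e else X.src e, fun _ => e,
    fun _ => rfl, fun _ => rfl⟩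

/-- Element-wise edge property of pullback squares. -/
lemma pullback_edge {K L D G : RGraph.{u}} {l : GraphHom K L}
    {d : GraphHom K D} {m : GraphHom L G} {l₁ : GraphHom D G}
    (hpb : IsPullbackSquare l d m l₁) (e' : L.E) (e : D.E)
    (he : m.fE e' = l₁.fE e) : ∃ e0 : K.E, l.fE e0 = e' ∧ d.fE e0 = e := by
  have hc : m.comp (homOfEdge L e') = l₁.comp (homOfEdge D e) := by
    ext b
    · obtain ⟨bb⟩ := b
      cases bb
      · show m.fN (L.src e') = l₁.fN (D.src e)
        rw [← m.hsrc, ← l₁.hsrc, he]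
      · show m.fN (L.tgt e') = l₁.fN (D.tgt e)
        rw [← m.htgt, ← l₁.htgt, he]
    · exact he
  obtain ⟨κ, ⟨h1, h2⟩, _⟩ := hpb.2 WEdge (homOfEdge L e') (homOfEdge D e) hc
  exact ⟨κ.fE PUnit.unit, congrFun (congrArg GraphHom.fE h1) PUnit.unit,
    congrFun (congrArg GraphHom.fE h2) PUnit.unit⟩

/-- A graph pullback square with fully polarized corner lifts to a
polarized pullback square. -/
lemma lift_ppb {Kg Lg : RGraph.{u}} (lg : GraphHom Kg Lg)
    {Dp Gp : PGraph.{u}} (mq : PGraphHom (fullyPolarized Lg) Gp)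
    (dq : PGraphHom (fullyPolarized Kg) Dp) (l₁q : PGraphHom Dp Gp)
    (hpb : IsPullbackSquare lg dq.toHom mq.toHom l₁q.toHom) :
    IsPPullbackSquare (spanPolarizedRule lg) dq mq l₁q := by
  refine ⟨pg_ext hpb.1, fun K' l' d'' hc => ?_⟩
  obtain ⟨κ, ⟨h1, h2⟩, huniq⟩ :=
    hpb.2 K'.toGraph l'.toHom d''.toHom (congrArg PGraphHom.toHom hc)
  refine ⟨⟨κ, fun _ _ => Set.mem_univ _, fun _ _ => Set.mem_univ _,
      fun e he => absurd (l'.hEs e he) (Set.notMem_empty _)⟩,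
    ⟨pg_ext h1, pg_ext h2⟩, fun y ⟨hy1, hy2⟩ => pg_ext
      (huniq y.toHom ⟨congrArg PGraphHom.toHom hy1,
        congrArg PGraphHom.toHom hy2⟩)⟩

/-- A polarized pullback square with fully polarized corner projects to a
graph pullback square. -/
lemma unlift_ppb {Kg Lg : RGraph.{u}} (lg : GraphHom Kg Lg)
    {Dp Gp : PGraph.{u}} (mq : PGraphHom (fullyPolarized Lg) Gp)
    (dq : PGraphHom (fullyPolarized Kg) Dp) (l₁q : PGraphHom Dp Gp)
    (hppb : IsPPullbackSquare (spanPolarizedRule lg) dq mq l₁q) :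
    IsPullbackSquare lg dq.toHom mq.toHom l₁q.toHom := by
  refine ⟨congrArg PGraphHom.toHom hppb.1, fun K'' l'' d'' hc => ?_⟩
  set K''p : PGraph.{u} := ⟨K'', ⟨d''.fN ⁻¹' Dp.pol.Np, d''.fN ⁻¹' Dp.pol.Nm, ∅,
    fun _ he => absurd he (Set.notMem_empty _),
    fun _ he => absurd he (Set.notMem_empty _)⟩⟩ with hK''p
  obtain ⟨κp, ⟨h1, h2⟩, huniq⟩ := hppb.2 K''p
    ⟨l'', fun _ _ => Set.mem_univ _, fun _ _ => Set.mem_univ _,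
      fun e he => absurd he (Set.notMem_empty _)⟩
    ⟨d'', fun _ hn => hn, fun _ hn => hn,
      fun e he => absurd he (Set.notMem_empty _)⟩ (pg_ext hc)
  refine ⟨κp.toHom, ⟨congrArg PGraphHom.toHom h1,
    congrArg PGraphHom.toHom h2⟩, fun κ' ⟨hκ1, hκ2⟩ => ?_⟩
  have : (⟨κ', fun _ _ => Set.mem_univ _, fun _ _ => Set.mem_univ _,
      fun e he => absurd he (Set.notMem_empty _)⟩ :
      PGraphHom K''p (fullyPolarized Kg)) = κp :=
    huniq _ ⟨pg_ext hκ1, pg_ext hκ2⟩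
  exact congrArg PGraphHom.toHom this

/-!
STATEMENT 18: every sesqui-pushout rewrite step with an injective matching
can be simulated by polarized-cloning rewriting: for the rule
`ρ = (L ← K → R)` and the polarized rule `ρ'` obtained by polarizing all
nodes of `K` and `L` positively and negatively and no edges, for every
injective matching `m : L → G`, if `G ⇒_sqpo,ρ H` then `G ⇒_pc,ρ' H`.
-/
theorem sqpo_implies_pc {K L R : RGraph.{u}} (l : GraphHom K L)
    (r : GraphHom K R) {G : RGraph.{u}} (m : GraphHom L G)
    (hmN : Function.Injective m.fN) (hmE : Function.Injective m.fE)
    (H : RGraph.{u}) (hsqpo : SqPOStep l r m H) :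
    PCStep (spanPolarizedRule l) r m H := by
  obtain ⟨D, d, l₁, ⟨hpb, hterm⟩, r₁, hh, hpo⟩ := hsqpo
  -- maximal polarization of G
  refine ⟨⟨Set.univ, Set.univ, {e | e ∉ Set.range m.fE},
      fun _ _ => Set.mem_univ _, fun _ _ => Set.mem_univ _⟩,
    ⟨m, fun _ _ => Set.mem_univ _, fun _ _ => Set.mem_univ _,
      fun e he => absurd he (Set.notMem_empty _)⟩, rfl, ?_, ?_⟩
  · -- MaxPol
    refine ⟨⟨hmN, hmE, fun n => ⟨fun _ => Set.mem_univ _, fun _ => Set.mem_univ _⟩,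
      fun n => ⟨fun _ => Set.mem_univ _, fun _ => Set.mem_univ _⟩,
      fun e => ⟨fun h' => absurd (Set.mem_range_self e) h',
        fun h' => absurd h' (Set.notMem_empty _)⟩⟩,
      fun n _ => ⟨Set.mem_univ _, Set.mem_univ _⟩,
      fun e he => ⟨fun _ => ⟨Set.mem_univ _, Set.mem_univ _⟩, fun _ => he⟩⟩
  · -- the polarized pushback and the pushout
    refine ⟨⟨D, ⟨Set.univ, Set.univ, {e | l₁.fE e ∉ Set.range m.fE},
        fun _ _ => Set.mem_univ _, fun _ _ => Set.mem_univ _⟩⟩,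
      ⟨d, fun _ _ => Set.mem_univ _, fun _ _ => Set.mem_univ _,
        fun e he => absurd he (Set.notMem_empty _)⟩,
      ⟨l₁, fun _ _ => Set.mem_univ _, fun _ _ => Set.mem_univ _,
        fun e he => he⟩, ?_, r₁, hh, hpo⟩
    refine ⟨⟨lift_ppb l _ _ _ hpb, fun e he _ => he, fun e he _ => ?_⟩, ?_⟩
    · -- LinkPolarized d
      rintro ⟨e', he'⟩
      obtain ⟨e0, _, he02⟩ := pullback_edge hpb e' e he'
      exact he ⟨e0, he02⟩
    · -- terminality among polarized PBCs
      rintro D' d' l₁' ⟨hppb', -, -⟩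
      obtain ⟨δ₀, ⟨hδ1, hδ2⟩, huniq⟩ :=
        hterm D'.toGraph d'.toHom l₁'.toHom (unlift_ppb l _ _ _ hppb')
      refine ⟨⟨δ₀, fun _ _ => Set.mem_univ _, fun _ _ => Set.mem_univ _,
        fun e he => ?_⟩, ⟨pg_ext hδ1, pg_ext hδ2⟩,
        fun y ⟨hy1, hy2⟩ => pg_ext (huniq y.toHom
          ⟨congrArg PGraphHom.toHom hy1, congrArg PGraphHom.toHom hy2⟩)⟩
      show l₁.fE (δ₀.fE e) ∉ Set.range m.fE
      have : l₁.fE (δ₀.fE e) = l₁'.toHom.fE e :=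
        congrFun (congrArg GraphHom.fE hδ2) e
      rw [this]
      exact l₁'.hEs e he
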